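/- Let F, G be probability measures on ℝ with finite first moments such that F - G has equal (zero) total mass, and let f̂, ĝ be their Fourier transforms. Then the Fourier transform of the integrable function x ↦ F((-∞,x]) - G((-∞,x]) equals (f̂(ξ) - ĝ(ξ))/(iξ) for ξ ≠ 0. -/

import Mathlib

open MeasureTheory Complex

/-- Fourier transform `f̂(ξ) = ∫ e^{-iξx} dF(x)` of a measure on `ℝ`. -/
noncomputable def ft (μ : Measure ℝ) (ξ : ℝ) : ℂ :=
  ∫ x, Complex.exp (-(Complex.I * ξ * x)) ∂μ

/-- Derivative of the Fourier transform: `f̂'(ξ) = -i ∫ x e^{-iξx} dF(x)`. -/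
noncomputable def ft' (μ : Measure ℝ) (ξ : ℝ) : ℂ :=
  ∫ x, -(Complex.I * x) * Complex.exp (-(Complex.I * ξ * x)) ∂μ

/-- The Fourier-based inequality index `T(F) = (1/2) sup_ξ |f̂(ξ) - f̂'(ξ)/f̂'(0)|`. -/
noncomputable def Tindex (μ : Measure ℝ) : ℝ :=
  (1 / 2) * ⨆ ξ : ℝ, ‖ft μ ξ - ft' μ ξ / ft' μ 0‖

noncomputable def kk (ξ t x : ℝ) : ℂ :=
  ((if t ≤ x then 1 else 0) - (if 0 ≤ x then 1 else 0)) * Complex.exp (-(Complex.I * ξ * x))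

lemma kk_eq (ξ t : ℝ) : (fun x => kk ξ t x) =
    (Set.Ico (min t 0) (max t 0)).indicator
      (fun x => (if t ≤ 0 then 1 else -1) * Complex.exp (-(Complex.I * ξ * x))) := by
  funext x
  rcases le_or_gt t 0 with ht | ht
  · by_cases hx : x ∈ Set.Ico (min t 0) (max t 0)
    · simp only [Set.indicator_of_mem hx]
      obtain ⟨h1, h2⟩ := hx
      rw [min_eq_left ht] at h1; rw [max_eq_right ht] at h2
      simp [kk, h1, not_le.2 h2, ht]
    · rw [Set.indicator_of_notMem hx]
      rw [Set.mem_Ico, min_eq_left ht, max_eq_right ht, not_and_or, not_le, not_lt] at hx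
      rcases hx with h | h
      · simp [kk, not_le.2 h, not_le.2 (h.trans_le ht)]
      · simp [kk, h, ht.trans h]
  · by_cases hx : x ∈ Set.Ico (min t 0) (max t 0)
    · simp only [Set.indicator_of_mem hx]
      obtain ⟨h1, h2⟩ := hx
      rw [min_eq_right ht.le] at h1; rw [max_eq_left ht.le] at h2
      simp [kk, not_le.2 h2, h1, not_le.2 ht]
    · rw [Set.indicator_of_notMem hx]
      rw [Set.mem_Ico, min_eq_right ht.le, max_eq_left ht.le, not_and_or, not_le, not_lt] at hx
      rcases hx with h | h
      · simp [kk, not_le.2 h, not_le.2 (h.trans ht)]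
      · simp [kk, h, ht.le.trans h]

lemma hc_ne (ξ : ℝ) (hξ : ξ ≠ 0) : (-(Complex.I * ξ)) ≠ 0 := by
  simp [Complex.I_ne_zero, Complex.ofReal_eq_zero, hξ]

lemma exp_Ico_integral (ξ : ℝ) (hξ : ξ ≠ 0) {a b : ℝ} (hab : a ≤ b) :
    ∫ x in Set.Ico a b, Complex.exp (-(Complex.I * ξ * x)) =
      (Complex.exp (-(Complex.I * ξ * b)) - Complex.exp (-(Complex.I * ξ * a)))
        / (-(Complex.I * ξ)) := by
  have hexp : ∀ x : ℝ, Complex.exp (-(Complex.I * ξ * x))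
      = Complex.exp ((-(Complex.I * ξ)) * x) := fun x => by ring_nf
  rw [integral_Ico_eq_integral_Ioo, ← integral_Ioc_eq_integral_Ioo,
    ← intervalIntegral.integral_of_le hab]
  simp_rw [hexp]
  rw [integral_exp_mul_complex (hc_ne ξ hξ)]

lemma kk_integral (ξ : ℝ) (hξ : ξ ≠ 0) (t : ℝ) :
    ∫ x, kk ξ t x = (Complex.exp (-(Complex.I * ξ * t)) - 1) / (Complex.I * ξ) := by
  have h0 : Complex.exp (-(Complex.I * ξ * (0 : ℝ))) = 1 := by
    simp
  rw [kk_eq, integral_indicator measurableSet_Ico]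
  rcases le_or_gt t 0 with ht | ht
  · rw [min_eq_left ht, max_eq_right ht]
    simp only [if_pos ht, one_mul]
    rw [exp_Ico_integral ξ hξ ht, h0]
    rw [div_neg, ← neg_div, neg_sub]
  · rw [min_eq_right ht.le, max_eq_left ht.le]
    simp only [if_neg (not_le.2 ht), neg_one_mul]
    rw [integral_neg, exp_Ico_integral ξ hξ ht.le, h0]
    rw [div_neg, neg_neg, sub_div]

lemma kk_measurable (ξ : ℝ) : Measurable (Function.uncurry (kk ξ)) := by
  unfold kk Function.uncurry
  refine Measurable.mul (Measurable.sub ?_ ?_) ?_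
  · exact Measurable.ite (measurableSet_le measurable_fst measurable_snd)
      measurable_const measurable_const
  · exact Measurable.ite (measurableSet_le measurable_const measurable_snd)
      measurable_const measurable_const
  · exact Complex.measurable_exp.comp (by fun_prop)

lemma norm_exp_eq (ξ x : ℝ) : ‖Complex.exp (-(Complex.I * ξ * x))‖ = 1 := by
  rw [Complex.norm_exp]
  simp

lemma kk_norm_le (ξ t x : ℝ) :
    ‖kk ξ t x‖ ≤ (Set.Ico (min t 0) (max t 0)).indicator (fun _ => (1 : ℝ)) x := by
  have := congrFun (kk_eq ξ t) x
  rw [this, norm_indicator_eq_indicator_norm]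
  apply Set.indicator_le_indicator' ?_
  intro _
  rw [norm_mul, norm_exp_eq]
  rcases le_or_gt t 0 with ht | ht <;> simp [ht, not_le.2, le_refl]

lemma kk_integrable_x (ξ t : ℝ) : Integrable (fun x => kk ξ t x) (volume : Measure ℝ) := by
  rw [kk_eq]
  rw [integrable_indicator_iff measurableSet_Ico]
  exact ((continuous_const.mul (Complex.continuous_exp.comp
    (by fun_prop))).integrableOn_Icc).mono_set Set.Ico_subset_Icc_self

lemma vol_Ico_toReal (t : ℝ) :
    ((volume (Set.Ico (min t 0) (max t 0))).toReal : ℝ) = |t| := by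
  rw [Real.volume_Ico, ENNReal.toReal_ofReal (by rcases le_total t 0 with h | h <;>
    simp [h, abs_of_nonpos, abs_of_nonneg, sub_nonneg, min_le_max])]
  rcases le_total t 0 with h | h
  · rw [min_eq_left h, max_eq_right h, abs_of_nonpos h]; ring
  · rw [min_eq_right h, max_eq_left h, _root_.abs_of_nonneg h]; ring

lemma kk_prod_integrable (μ : Measure ℝ) [IsProbabilityMeasure μ]
    (hμint : Integrable (fun x : ℝ => x) μ) (ξ : ℝ) :
    Integrable (Function.uncurry (kk ξ)) (μ.prod volume) := by
  have hm : AEStronglyMeasurable (Function.uncurry (kk ξ)) (μ.prod volume) :=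
    (kk_measurable ξ).aestronglyMeasurable
  rw [integrable_prod_iff hm]
  constructor
  · exact ae_of_all _ fun t => kk_integrable_x ξ t
  · have hind : ∀ t : ℝ, Integrable
        ((Set.Ico (min t 0) (max t 0)).indicator (fun _ => (1 : ℝ))) volume := by
      intro t
      rw [integrable_indicator_iff measurableSet_Ico]
      exact integrableOn_const (by rw [Real.volume_Ico]; exact ENNReal.ofReal_ne_top)
    apply Integrable.mono' hμint.abs
    · exact (hm.norm.integral_prod_right')
    · refine ae_of_all _ fun t => ?_
      have h1 : ∫ x, ‖kk ξ t x‖ ≤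
          ∫ x, (Set.Ico (min t 0) (max t 0)).indicator (fun _ => (1 : ℝ)) x := by
        apply integral_mono (kk_integrable_x ξ t).norm (hind t) (kk_norm_le ξ t)
      have h2 : ∫ x, (Set.Ico (min t 0) (max t 0)).indicator (fun _ => (1 : ℝ)) x = |t| := by
        rw [integral_indicator_const (1 : ℝ) measurableSet_Ico, smul_eq_mul, mul_one,
          measureReal_def, vol_Ico_toReal]
      rw [Real.norm_eq_abs, _root_.abs_of_nonneg (integral_nonneg fun x => norm_nonneg _)]
      rw [← h2]; exact h1

lemma exp_integrable (μ : Measure ℝ) [IsProbabilityMeasure μ] (ξ : ℝ) :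
    Integrable (fun t : ℝ => Complex.exp (-(Complex.I * ξ * t))) μ := by
  apply Integrable.mono' (integrable_const (1 : ℝ))
  · exact (Complex.continuous_exp.comp (by fun_prop)).aestronglyMeasurable
  · exact ae_of_all _ fun t => le_of_eq (norm_exp_eq ξ t)

lemma pointwise_eq (μ : Measure ℝ) [IsProbabilityMeasure μ] (ξ x : ℝ) :
    (((μ (Set.Iic x)).toReal : ℂ) - (if 0 ≤ x then 1 else 0))
        * Complex.exp (-(Complex.I * ξ * x)) = ∫ t, kk ξ t x ∂μ := by
  unfold kk
  rw [integral_mul_const]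
  congr 1
  have hind : (fun t : ℝ => (if t ≤ x then (1 : ℂ) else 0))
      = (Set.Iic x).indicator (fun _ => (1 : ℂ)) := by
    funext t; simp [Set.indicator_apply, Set.mem_Iic]
  rw [integral_sub]
  · rw [integral_const]
    congr 1
    · rw [show (fun t : ℝ => (if t ≤ x then (1 : ℂ) else 0)) =
        (Set.Iic x).indicator (fun _ => (1 : ℂ)) from hind]
      rw [integral_indicator_const (1 : ℂ) measurableSet_Iic]
      simp [measureReal_def]
    · simp
  · rw [show (fun t : ℝ => (if t ≤ x then (1 : ℂ) else 0)) =
      (Set.Iic x).indicator (fun _ => (1 : ℂ)) from hind]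
    rw [integrable_indicator_iff measurableSet_Iic]
    exact integrableOn_const (measure_ne_top μ _)
  · exact integrable_const _

lemma key (μ : Measure ℝ) [IsProbabilityMeasure μ]
    (hμint : Integrable (fun x : ℝ => x) μ) (ξ : ℝ) (hξ : ξ ≠ 0) :
    Integrable (fun x : ℝ => (((μ (Set.Iic x)).toReal : ℂ) - (if 0 ≤ x then 1 else 0))
        * Complex.exp (-(Complex.I * ξ * x))) volume ∧
    ∫ x : ℝ, (((μ (Set.Iic x)).toReal : ℂ) - (if 0 ≤ x then 1 else 0))
        * Complex.exp (-(Complex.I * ξ * x)) = (ft μ ξ - 1) / (Complex.I * ξ) := by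
  have hprod := kk_prod_integrable μ hμint ξ
  have heq : (fun x : ℝ => (((μ (Set.Iic x)).toReal : ℂ) - (if 0 ≤ x then 1 else 0))
      * Complex.exp (-(Complex.I * ξ * x))) = fun x => ∫ t, kk ξ t x ∂μ := by
    funext x; exact pointwise_eq μ ξ x
  constructor
  · rw [heq]; exact hprod.integral_prod_right
  · rw [heq]
    rw [← integral_integral_swap hprod]
    have : ∀ t : ℝ, ∫ x, kk ξ t x =
        (Complex.exp (-(Complex.I * ξ * t)) - 1) / (Complex.I * ξ) :=
      kk_integral ξ hξ
    simp_rw [this]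
    rw [integral_div, integral_sub (exp_integrable μ ξ) (integrable_const _), integral_const]
    simp [ft]

theorem stmt_16 (μ ν : Measure ℝ) [IsProbabilityMeasure μ] [IsProbabilityMeasure ν]
    (hμint : Integrable (fun x : ℝ => x) μ) (hνint : Integrable (fun x : ℝ => x) ν)
    (ξ : ℝ) (hξ : ξ ≠ 0) :
    ∫ x : ℝ, (((μ (Set.Iic x)).toReal - (ν (Set.Iic x)).toReal) : ℂ)
        * Complex.exp (-(Complex.I * ξ * x))
      = (ft μ ξ - ft ν ξ) / (Complex.I * ξ) := by
  obtain ⟨hμI, hμE⟩ := key μ hμint ξ hξ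
  obtain ⟨hνI, hνE⟩ := key ν hνint ξ hξ
  have heq : ∀ x : ℝ, (((μ (Set.Iic x)).toReal : ℂ) - ((ν (Set.Iic x)).toReal : ℂ))
      * Complex.exp (-(Complex.I * ξ * x))
      = (((μ (Set.Iic x)).toReal : ℂ) - (if 0 ≤ x then 1 else 0))
          * Complex.exp (-(Complex.I * ξ * x))
        - (((ν (Set.Iic x)).toReal : ℂ) - (if 0 ≤ x then 1 else 0))
          * Complex.exp (-(Complex.I * ξ * x)) := by
    intro x; ring
  simp_rw [heq]
  rw [integral_sub hμI hνI, hμE, hνE, div_sub_div_same]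
  ring_nf
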